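/- For a bounded function f : [0,1] → ℝ with C = sup_{t∈[0,1]} |f(t)|, and any two tagged partitions (Π₁,T₁), (Π₂,T₂) ∈ TP[0,1], one has |S(f,Π₁,T₁) − S(f,Π₂,T₂)| ≤ C · ρ((Π₁,T₁),(Π₂,T₂)). -/
import Mathlib


open Filter Topology

/-- A tagged partition of the segment `[a, b]`:
points `a = ξ₀ ≤ ξ₁ ≤ ... ≤ ξₙ = b` together with tags `tₖ ∈ [ξₖ₋₁, ξₖ]`. -/
structure TaggedPartition (a b : ℝ) where
  n : ℕ
  pts : Fin (n + 1) → ℝ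
  mono : Monotone pts
  first : pts 0 = a
  last : pts (Fin.last n) = b
  tag : Fin n → ℝ
  tag_ge : ∀ k : Fin n, pts k.castSucc ≤ tag k
  tag_le : ∀ k : Fin n, tag k ≤ pts k.succ

namespace TaggedPartition

variable {a b : ℝ}

/-- Length `Δₖ = ξₖ - ξₖ₋₁` of the `k`-th subinterval. -/
def len (P : TaggedPartition a b) (k : Fin P.n) : ℝ :=
  P.pts k.succ - P.pts k.castSucc

/-- Riemann sum `S(f, Π, T) = Σₖ f(tₖ)·Δₖ`. -/
def RS (f : ℝ → ℝ) (P : TaggedPartition a b) : ℝ :=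
  ∑ k, f (P.tag k) * P.len k

/-- `d(Π) < δ`: every subinterval has length `< δ`. -/
def diamLT (P : TaggedPartition a b) (δ : ℝ) : Prop :=
  ∀ k : Fin P.n, P.len k < δ

/-- `ℓ(Π, T, τ)`: total length of the subintervals whose tag is `τ`
(`0` if `τ` is not a tag). -/
noncomputable def tagLen (P : TaggedPartition a b) (τ : ℝ) : ℝ :=
  ∑ k ∈ Finset.univ.filter (fun k => P.tag k = τ), P.len k

/-- The (finite) set of tags of a tagged partition. -/
noncomputable def tagSet (P : TaggedPartition a b) : Finset ℝ :=
  Finset.image P.tag Finset.univ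

/-- The distance
`ρ((Π₁,T₁),(Π₂,T₂)) = Σ_{t∈T₁∩T₂}|Δ₁(t)−Δ₂(t)| + Σ_{t∈T₁∖T₂}Δ₁(t) + Σ_{t∈T₂∖T₁}Δ₂(t)`. -/
noncomputable def ρ (P Q : TaggedPartition a b) : ℝ :=
  ∑ τ ∈ P.tagSet ∩ Q.tagSet, |P.tagLen τ - Q.tagLen τ|
    + ∑ τ ∈ P.tagSet \ Q.tagSet, P.tagLen τ
    + ∑ τ ∈ Q.tagSet \ P.tagSet, Q.tagLen τ

end TaggedPartition

/-- Tagged partitions of `[0,1]`. -/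
abbrev TP01 := TaggedPartition 0 1

/-- The filter `𝔉_{<δ}` on `TP[0,1]` generated by the base
`P_{<δ} = {(Π,T) : d(Π) < δ}`, `δ > 0`; convergence of Riemann sums along it
is Riemann integrability. -/
noncomputable def riemannFilter : Filter TP01 :=
  ⨅ δ ∈ Set.Ioi (0 : ℝ), Filter.principal {P : TP01 | P.diamLT δ}

/-- `𝔉₂` ρ-dominates `𝔉₁`. -/
def RhoDominates (F₂ F₁ : Filter TP01) : Prop :=
  ∀ ε > (0:ℝ), ∀ A₁ ∈ F₁, ∃ A₂ ∈ F₂, ∀ Q ∈ A₂, ∃ P ∈ A₁, TaggedPartition.ρ P Q < ε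

namespace TaggedPartition

variable {a b : ℝ}

lemma len_nonneg (P : TaggedPartition a b) (k : Fin P.n) : 0 ≤ P.len k :=
  sub_nonneg.2 (P.mono (Fin.castSucc_le_succ k))

lemma tagLen_nonneg (P : TaggedPartition a b) (τ : ℝ) : 0 ≤ P.tagLen τ :=
  Finset.sum_nonneg fun k _ => P.len_nonneg k

lemma tagLen_eq_zero (P : TaggedPartition a b) {τ : ℝ} (h : τ ∉ P.tagSet) :
    P.tagLen τ = 0 := by
  unfold tagLen
  rw [Finset.filter_false_of_mem, Finset.sum_empty]
  intro k _ hk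
  exact h (Finset.mem_image.2 ⟨k, Finset.mem_univ k, hk⟩)

lemma tag_mem (P : TP01) (k : Fin P.n) : P.tag k ∈ Set.Icc (0:ℝ) 1 := by
  constructor
  · calc (0:ℝ) = P.pts 0 := P.first.symm
      _ ≤ P.pts k.castSucc := P.mono (Fin.zero_le _)
      _ ≤ P.tag k := P.tag_ge k
  · calc P.tag k ≤ P.pts k.succ := P.tag_le k
      _ ≤ P.pts (Fin.last P.n) := P.mono (Fin.le_last _)
      _ = 1 := P.last

lemma RS_eq (f : ℝ → ℝ) (P : TaggedPartition a b) :
    P.RS f = ∑ τ ∈ P.tagSet, f τ * P.tagLen τ := by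
  unfold RS tagSet
  refine (Finset.sum_image' (fun k => f (P.tag k) * P.len k) fun c _ => ?_).symm
  unfold tagLen
  rw [Finset.mul_sum]
  exact Finset.sum_congr rfl fun k hk => by simp only [(Finset.mem_filter.1 hk).2]

end TaggedPartition

/-- Key estimate: for bounded `f` with `C = sup_{t∈[0,1]} |f t|`,
`|S(f,Π₁,T₁) − S(f,Π₂,T₂)| ≤ C · ρ((Π₁,T₁),(Π₂,T₂))`. -/
theorem riemann_sum_diff_le_rho (f : ℝ → ℝ) (C : ℝ)
    (hC : IsLUB ((fun t => |f t|) '' Set.Icc (0:ℝ) 1) C)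
    (P Q : TP01) :
    |TaggedPartition.RS f P - TaggedPartition.RS f Q| ≤ C * TaggedPartition.ρ P Q := by
  classical
  open TaggedPartition in
  set A := P.tagSet with hA
  set B := Q.tagSet with hB
  -- bound on |f τ| for tags
  have hfC : ∀ τ ∈ A ∪ B, |f τ| ≤ C := by
    intro τ hτ
    have : τ ∈ Set.Icc (0:ℝ) 1 := by
      rcases Finset.mem_union.1 hτ with h | h
      · obtain ⟨k, _, rfl⟩ := Finset.mem_image.1 h
        exact P.tag_mem k
      · obtain ⟨k, _, rfl⟩ := Finset.mem_image.1 h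
        exact Q.tag_mem k
    exact hC.1 ⟨τ, this, rfl⟩
  -- Riemann sums as sums over A ∪ B
  have hP : P.RS f = ∑ τ ∈ A ∪ B, f τ * P.tagLen τ := by
    rw [P.RS_eq f]
    exact Finset.sum_subset Finset.subset_union_left
      (fun τ _ hτ => by rw [P.tagLen_eq_zero hτ, mul_zero])
  have hQ : Q.RS f = ∑ τ ∈ A ∪ B, f τ * Q.tagLen τ := by
    rw [Q.RS_eq f]
    exact Finset.sum_subset Finset.subset_union_right
      (fun τ _ hτ => by rw [Q.tagLen_eq_zero hτ, mul_zero])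
  have key : P.RS f - Q.RS f = ∑ τ ∈ A ∪ B, f τ * (P.tagLen τ - Q.tagLen τ) := by
    rw [hP, hQ, ← Finset.sum_sub_distrib]
    exact Finset.sum_congr rfl fun τ _ => (mul_sub _ _ _).symm
  -- ρ as a single sum over A ∪ B
  have hρ : TaggedPartition.ρ P Q = ∑ τ ∈ A ∪ B, |P.tagLen τ - Q.tagLen τ| := by
    have h1 : ∑ τ ∈ A ∪ B, |P.tagLen τ - Q.tagLen τ|
        = ∑ τ ∈ A, |P.tagLen τ - Q.tagLen τ| + ∑ τ ∈ B \ A, |P.tagLen τ - Q.tagLen τ| := by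
      rw [← Finset.sum_union Finset.disjoint_sdiff, Finset.union_sdiff_self_eq_union]
    have h2 : ∑ τ ∈ A, |P.tagLen τ - Q.tagLen τ|
        = ∑ τ ∈ A ∩ B, |P.tagLen τ - Q.tagLen τ| + ∑ τ ∈ A \ B, |P.tagLen τ - Q.tagLen τ| :=
      (Finset.sum_inter_add_sum_sdiff A B _).symm
    have h3 : ∑ τ ∈ A \ B, |P.tagLen τ - Q.tagLen τ| = ∑ τ ∈ A \ B, P.tagLen τ :=
      Finset.sum_congr rfl fun τ hτ => by
        rw [Q.tagLen_eq_zero (Finset.mem_sdiff.1 hτ).2, sub_zero,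
          abs_of_nonneg (P.tagLen_nonneg τ)]
    have h4 : ∑ τ ∈ B \ A, |P.tagLen τ - Q.tagLen τ| = ∑ τ ∈ B \ A, Q.tagLen τ :=
      Finset.sum_congr rfl fun τ hτ => by
        rw [P.tagLen_eq_zero (Finset.mem_sdiff.1 hτ).2, zero_sub,
          abs_neg, abs_of_nonneg (Q.tagLen_nonneg τ)]
    rw [TaggedPartition.ρ, h1, h2, h3, h4]
  rw [key, hρ, Finset.mul_sum]
  calc |∑ τ ∈ A ∪ B, f τ * (P.tagLen τ - Q.tagLen τ)|
      ≤ ∑ τ ∈ A ∪ B, |f τ * (P.tagLen τ - Q.tagLen τ)| := Finset.abs_sum_le_sum_abs _ _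
    _ ≤ ∑ τ ∈ A ∪ B, C * |P.tagLen τ - Q.tagLen τ| := by
        refine Finset.sum_le_sum fun τ hτ => ?_
        rw [abs_mul]
        exact mul_le_mul_of_nonneg_right (hfC τ hτ) (abs_nonneg _)
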